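/- Let H be an infinite-dimensional separable Hilbert space and K ⊂ H a compact subset. Then for every C > 1 there exist constants 0 < c₁ ≤ c₂ and a frame {h_i}_{i∈ℕ} for H with frame bounds A, B satisfying B/A < C and c₁ ≤ ‖h_i‖_H ≤ c₂ for all i, such that: for every f ∈ K and every ε > 0 there exist indices i₁, i₂ ∈ ℕ and scalars c₁′, c₂′ with ‖f − c₁′·h_{i₁} − c₂′·h_{i₂}‖_H < ε (i.e., the best 2-term approximation error from the frame is 0 on K). -/

import Mathlib

open scoped RealInnerProductSpace

-- auxiliary: ℕ-indexed orthonormal family with Parseval, in an infinite-dim separable Hilbert space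
theorem exists_nat_onb
    {H : Type*} [NormedAddCommGroup H] [InnerProductSpace ℝ H] [CompleteSpace H]
    [TopologicalSpace.SeparableSpace H]
    (hinf : ¬ FiniteDimensional ℝ H) :
    ∃ e : ℕ → H, Orthonormal ℝ e ∧
      ∀ f : H, HasSum (fun k => ⟪f, e k⟫ ^ 2) (‖f‖ ^ 2) := by
  classical
  obtain ⟨w, b, hb⟩ := exists_hilbertBasis ℝ H
  have horth : Orthonormal ℝ (b : w → H) := b.orthonormal
  -- countable
  have hcw : Countable w := by
    refine Pairwise.countable_of_isOpen_disjoint (ι := w)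
      (s := fun i => Metric.ball (b i) (2⁻¹)) ?_ (fun i => Metric.isOpen_ball)
      (fun i => Metric.nonempty_ball.2 (by norm_num))
    intro i j hij
    have h1 : ‖b i - b j‖ ^ 2 = 2 := by
      rw [norm_sub_sq_real, horth.1 i, horth.1 j, horth.2 hij]
      norm_num
    have h2 : (1 : ℝ) ≤ dist (b i) (b j) := by
      rw [dist_eq_norm]
      nlinarith [norm_nonneg (b i - b j)]
    exact Metric.ball_disjoint_ball (by linarith)
  -- infinite
  have hiw : Infinite w := by
    rw [← not_finite_iff_infinite]
    intro hfin
    apply hinf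
    have hwfin : (w : Set H).Finite := Set.toFinite w
    have hfd : FiniteDimensional ℝ (Submodule.span ℝ w) :=
      FiniteDimensional.span_of_finite ℝ hwfin
    have hcl : IsClosed ((Submodule.span ℝ w : Submodule ℝ H) : Set H) :=
      Submodule.closed_of_finiteDimensional _
    have hds := b.dense_span
    rw [hb, Subtype.range_coe] at hds
    have htop : Submodule.span ℝ w = ⊤ := by
      rwa [hcl.submodule_topologicalClosure_eq] at hds
    rw [htop] at hfd
    exact (Submodule.topEquiv (R := ℝ) (M := H)).finiteDimensional
  have : Denumerable (↥w) := (nonempty_denumerable (↥w)).some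
  let q : ℕ ≃ w := (Denumerable.eqv (↥w)).symm
  refine ⟨fun k => b (q k), horth.comp q q.injective, fun f => ?_⟩
  have h1 : HasSum (fun i : w => ⟪f, b i⟫ * ⟪b i, f⟫) ⟪f, f⟫ :=
    b.hasSum_inner_mul_inner f f
  have h2 := q.hasSum_iff.mpr h1
  have h3 : ((fun i : w => ⟪f, b i⟫ * ⟪b i, f⟫) ∘ q) = fun k => ⟪f, b (q k)⟫ ^ 2 := by
    funext k
    simp [Function.comp, real_inner_comm, sq]
  rw [h3] at h2
  rwa [real_inner_self_eq_norm_sq] at h2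

-- bounded dense sequence covering K
theorem exists_bounded_dense_seq
    {H : Type*} [NormedAddCommGroup H] [InnerProductSpace ℝ H]
    [TopologicalSpace.SeparableSpace H]
    (K : Set H) (hK : IsCompact K) :
    ∃ (R : ℝ) (g : ℕ → H), 0 < R ∧ (∀ n, ‖g n‖ ≤ R) ∧
      ∀ f ∈ K, ∀ ε > 0, ∃ n, ‖f - g n‖ < ε := by
  classical
  obtain ⟨R₀, hR₀⟩ := isBounded_iff_forall_norm_le.1 hK.isBounded
  set R : ℝ := max R₀ 0 + 1 with hR
  have hRpos : 0 < R := by positivity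
  have d := TopologicalSpace.denseSeq H
  have hd : DenseRange (TopologicalSpace.denseSeq H) := TopologicalSpace.denseRange_denseSeq H
  refine ⟨R, fun n => if ‖TopologicalSpace.denseSeq H n‖ ≤ R then TopologicalSpace.denseSeq H n else 0,
    hRpos, fun n => ?_, fun f hf ε hε => ?_⟩
  · dsimp only
    split
    · assumption
    · simp [hRpos.le]
  · obtain ⟨n, hn⟩ := Metric.denseRange_iff.1 hd f (min ε 1) (lt_min hε one_pos)
    rw [dist_eq_norm] at hn
    have hfn : ‖TopologicalSpace.denseSeq H n‖ ≤ R := by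
      have h1 : ‖f‖ ≤ max R₀ 0 := le_max_of_le_left (hR₀ f hf)
      have h2 : ‖TopologicalSpace.denseSeq H n‖ ≤ ‖f - TopologicalSpace.denseSeq H n‖ + ‖f‖ := by
        have h4 := norm_add_le (TopologicalSpace.denseSeq H n - f) f
        rw [sub_add_cancel, norm_sub_rev] at h4
        exact h4
      have h3 : ‖f - TopologicalSpace.denseSeq H n‖ ≤ 1 := le_of_lt (lt_of_lt_of_le hn (min_le_right _ _))
      rw [hR]; linarith
    refine ⟨n, ?_⟩
    dsimp only
    rw [if_pos hfn]
    exact lt_of_lt_of_le hn (min_le_left _ _)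


set_option maxHeartbeats 1000000 in
/-- Let `H` be an infinite-dimensional separable Hilbert space and
`K ⊆ H` compact.  For every `C > 1` there are constants `0 < c₁ ≤ c₂` and a frame
`{h_i}` for `H` with frame bounds `A, B`, `B/A < C`, and `c₁ ≤ ‖h_i‖ ≤ c₂` for all
`i`, such that every `f ∈ K` can be approximated to arbitrary precision by a linear
combination of two frame elements. -/
theorem exists_pathological_normed_frame_two_term
    {H : Type*} [NormedAddCommGroup H] [InnerProductSpace ℝ H] [CompleteSpace H]
    [TopologicalSpace.SeparableSpace H]
    (hinf : ¬ FiniteDimensional ℝ H)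
    (K : Set H) (hK : IsCompact K) (C : ℝ) (hC : 1 < C) :
    ∃ (c₁ c₂ : ℝ) (h : ℕ → H) (A B : ℝ), 0 < c₁ ∧ c₁ ≤ c₂ ∧
      0 < A ∧ 0 < B ∧ B / A < C ∧
      (∀ i : ℕ, c₁ ≤ ‖h i‖ ∧ ‖h i‖ ≤ c₂) ∧
      (∀ f : H, Summable (fun k => ⟪f, h k⟫ ^ 2) ∧
        A ^ 2 * ∑' k, ⟪f, h k⟫ ^ 2 ≤ ‖f‖ ^ 2 ∧
        ‖f‖ ^ 2 ≤ B ^ 2 * ∑' k, ⟪f, h k⟫ ^ 2) ∧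
      ∀ f ∈ K, ∀ ε > 0, ∃ (i₁ i₂ : ℕ) (a b : ℝ),
        ‖f - a • h i₁ - b • h i₂‖ < ε := by
  classical
  obtain ⟨e, he, hPars⟩ := exists_nat_onb hinf
  obtain ⟨R, g, hRpos, hgR, hgdense⟩ := exists_bounded_dense_seq K hK
  -- small parameter
  set ε₀ : ℝ := min (1/2) ((C-1)/4) with hε₀def
  have hε₀pos : 0 < ε₀ := lt_min (by norm_num) (by linarith)
  have hε₀half : ε₀ ≤ 1/2 := min_le_left _ _
  have hε₀C : ε₀ ≤ (C-1)/4 := min_le_right _ _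
  -- the geometric weights
  set δ : ℕ → ℝ := fun k => ε₀ / (2*R) * (1/2)^k with hδdef
  have hδpos : ∀ k, 0 < δ k := fun k => by positivity
  have hδR : ∀ k, δ k * R ≤ ε₀ / 2 := by
    intro k
    have h1 : (1/2:ℝ)^k ≤ 1 := pow_le_one₀ (by norm_num) (by norm_num)
    have : δ k * R = ε₀/2 * (1/2)^k := by simp only [hδdef]; field_simp
    rw [this]
    nlinarith
  -- the frame
  set h : ℕ → H := fun n => if n % 2 = 0 then e (n/2) else ε₀ • e (n/2) + δ (n/2) • g (n/2)
    with hhdef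
  have heven : ∀ k, h (2*k) = e k := by
    intro k
    have h1 : (2*k) % 2 = 0 := by omega
    have h2 : (2*k) / 2 = k := by omega
    simp [hhdef, h1, h2]
  have hodd : ∀ k, h (2*k+1) = ε₀ • e k + δ k • g k := by
    intro k
    have h1 : (2*k+1) % 2 = 1 := by omega
    have h2 : (2*k+1) / 2 = k := by omega
    simp [hhdef, h1, h2]
  -- frame constants
  set s : ℝ := (8/3) * ε₀^2 with hsdef
  have hs0 : 0 ≤ s := by positivity
  have hsC : 1 + s < C^2 := by nlinarith
  set A : ℝ := (Real.sqrt (1+s))⁻¹ with hAdef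
  have hsq : Real.sqrt (1+s) ^ 2 = 1 + s := Real.sq_sqrt (by linarith)
  have hsqrtpos : 0 < Real.sqrt (1+s) := Real.sqrt_pos.2 (by linarith)
  have hApos : 0 < A := by positivity
  have hA2 : A^2 = (1+s)⁻¹ := by rw [hAdef, inv_pow, hsq]
  have hδsq : ∀ k, (δ k)^2 = (ε₀/(2*R))^2 * (1/4)^k := by
    intro k
    have hh : δ k = ε₀ / (2*R) * (1/2)^k := rfl
    rw [hh, mul_pow, ← pow_mul]
    congr 1
    rw [mul_comm, pow_mul]
    norm_num
  have hBA : (1:ℝ) / A < C := by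
    rw [hAdef, one_div, inv_inv]
    have hCeq : C = Real.sqrt (C^2) := (Real.sqrt_sq (by linarith)).symm
    rw [hCeq]
    exact Real.sqrt_lt_sqrt (by linarith) hsC
  have hs_eq : s = (8/3)*ε₀^2 := hsdef
  clear_value ε₀ δ h s A
  clear hε₀def hδdef hhdef hsdef hAdef hsq hsqrtpos
  refine ⟨ε₀/2, 1, h, A, 1, by positivity, by linarith, hApos, one_pos, ?_, ?_, ?_, ?_⟩
  · -- B / A < C
    exact hBA
  · -- norm bounds
    intro i
    rcases Nat.even_or_odd i with ⟨k, hk⟩ | ⟨k, hk⟩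
    · have : i = 2*k := by omega
      rw [this, heven, he.1 k]
      constructor <;> linarith
    · rw [hk, hodd]
      have hnge : ‖ε₀ • e k‖ = ε₀ := by
        rw [norm_smul, he.1 k, Real.norm_eq_abs, abs_of_pos hε₀pos, mul_one]
      have hngd : ‖δ k • g k‖ ≤ ε₀/2 := by
        rw [norm_smul, Real.norm_eq_abs, abs_of_pos (hδpos k)]
        calc δ k * ‖g k‖ ≤ δ k * R := by
              exact mul_le_mul_of_nonneg_left (hgR k) (hδpos k).le
          _ ≤ ε₀/2 := hδR k
      constructor
      · have hlow : ‖ε₀ • e k‖ - ‖δ k • g k‖ ≤ ‖ε₀ • e k + δ k • g k‖ := by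
          have := norm_sub_norm_le (ε₀ • e k) (-(δ k • g k))
          simpa [sub_neg_eq_add] using this
        rw [hnge] at hlow
        linarith
      · have hup := norm_add_le (ε₀ • e k) (δ k • g k)
        rw [hnge] at hup
        linarith
  · -- frame bounds
    intro f
    -- even part
    have hq : HasSum (fun k => ⟪f, h (2*k)⟫ ^ 2) (‖f‖^2) := by
      have := hPars f
      convert this using 2 with k
      rw [heven]
    -- odd part bound
    have hCS : ∀ k, ⟪f, g k⟫^2 ≤ (R * ‖f‖)^2 := by
      intro k
      have h1 := abs_real_inner_le_norm f (g k)
      have h2 : ‖g k‖ ≤ R := hgR k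
      have h3 : |⟪f, g k⟫| ≤ R * ‖f‖ := by
        calc |⟪f, g k⟫| ≤ ‖f‖ * ‖g k‖ := h1
          _ ≤ R * ‖f‖ := by nlinarith [norm_nonneg f]
      nlinarith [abs_nonneg ⟪f, g k⟫, sq_abs ⟪f, g k⟫]
    have hoddval : ∀ k, ⟪f, h (2*k+1)⟫ = ε₀ * ⟪f, e k⟫ + δ k * ⟪f, g k⟫ := by
      intro k
      rw [hodd, inner_add_right, real_inner_smul_right, real_inner_smul_right]
    have hbound : ∀ k, ⟪f, h (2*k+1)⟫^2 ≤
        2*ε₀^2 * ⟪f, e k⟫^2 + (2*(R*‖f‖)^2 * (ε₀/(2*R))^2) * (1/4)^k := by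
      intro k
      rw [hoddval]
      have h1 : (ε₀ * ⟪f, e k⟫ + δ k * ⟪f, g k⟫)^2 ≤
          2*ε₀^2*⟪f, e k⟫^2 + 2*(δ k)^2*⟪f, g k⟫^2 := by
        nlinarith [sq_nonneg (ε₀ * ⟪f, e k⟫ - δ k * ⟪f, g k⟫)]
      have h2 : 2*(δ k)^2*⟪f, g k⟫^2 ≤ 2*(δ k)^2*(R*‖f‖)^2 := by
        nlinarith [hCS k, sq_nonneg (δ k)]
      have h3 : 2*(δ k)^2*(R*‖f‖)^2 = (2*(R*‖f‖)^2 * (ε₀/(2*R))^2) * (1/4)^k := by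
        rw [hδsq k]; ring
      linarith
    have hgeo : Summable (fun k : ℕ => ((1:ℝ)/4)^k) :=
      summable_geometric_of_lt_one (by norm_num) (by norm_num)
    have hBsum : Summable (fun k => 2*ε₀^2 * ⟪f, e k⟫^2 +
        (2*(R*‖f‖)^2 * (ε₀/(2*R))^2) * (1/4)^k) :=
      ((hPars f).summable.mul_left (2*ε₀^2)).add (hgeo.mul_left _)
    have hp : Summable (fun k => ⟪f, h (2*k+1)⟫^2) :=
      Summable.of_nonneg_of_le (fun k => sq_nonneg _) hbound hBsum
    have htsumB : ∑' k, (2*ε₀^2 * ⟪f, e k⟫^2 + (2*(R*‖f‖)^2 * (ε₀/(2*R))^2) * (1/4)^k)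
        = 2*ε₀^2*‖f‖^2 + (2*(R*‖f‖)^2 * (ε₀/(2*R))^2) * (4/3) := by
      rw [Summable.tsum_add ((hPars f).summable.mul_left _) (hgeo.mul_left _), tsum_mul_left,
        tsum_mul_left, (hPars f).tsum_eq,
        tsum_geometric_of_lt_one (by norm_num) (by norm_num)]
      norm_num
    have hpbound : ∑' k, ⟪f, h (2*k+1)⟫^2 ≤ s * ‖f‖^2 := by
      have hle := Summable.tsum_le_tsum hbound hp hBsum
      rw [htsumB] at hle
      have hTeq : (2*(R*‖f‖)^2 * (ε₀/(2*R))^2) * (4/3) = (2/3)*ε₀^2*‖f‖^2 := by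
        field_simp
        ring
      rw [hTeq] at hle
      rw [hs_eq]
      linarith
    have hP0 : (0:ℝ) ≤ ∑' k, ⟪f, h (2*k+1)⟫^2 := tsum_nonneg fun k => sq_nonneg _
    have htot : HasSum (fun n => ⟪f, h n⟫^2) (‖f‖^2 + ∑' k, ⟪f, h (2*k+1)⟫^2) :=
      HasSum.even_add_odd (f := fun n => ⟪f, h n⟫^2) hq hp.hasSum
    refine ⟨htot.summable, ?_, ?_⟩
    · rw [htot.tsum_eq, hA2]
      have h1s : (0:ℝ) < 1 + s := by linarith
      have hkey : ‖f‖^2 + ∑' k, ⟪f, h (2*k+1)⟫^2 ≤ (1+s) * ‖f‖^2 := by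
        have hsf : s * ‖f‖^2 + ‖f‖^2 = (1+s) * ‖f‖^2 := by ring
        linarith [hpbound]
      have := mul_le_mul_of_nonneg_left hkey (inv_nonneg.2 h1s.le)
      have heq : (1+s)⁻¹ * ((1+s) * ‖f‖^2) = ‖f‖^2 := by
        field_simp
      linarith
    · rw [htot.tsum_eq, one_pow, one_mul]
      linarith
  · -- two-term approximation
    intro f hf ε hε
    obtain ⟨n, hn⟩ := hgdense f hf ε hε
    refine ⟨2*n+1, 2*n, (δ n)⁻¹, -(ε₀ * (δ n)⁻¹), ?_⟩
    have hδn : δ n ≠ 0 := (hδpos n).ne'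
    have key : f - (δ n)⁻¹ • h (2*n+1) - (-(ε₀ * (δ n)⁻¹)) • h (2*n) = f - g n := by
      rw [heven, hodd, smul_add, smul_smul, smul_smul, inv_mul_cancel₀ hδn, one_smul]
      have hcomm : (δ n)⁻¹ * ε₀ = ε₀ * (δ n)⁻¹ := mul_comm _ _
      rw [hcomm, neg_smul, sub_neg_eq_add]
      abel
    rw [key]
    exact hn
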